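/- arXiv:1003.2290 — 5 statements merged into one kernel-verified Lean document; each statement's English description precedes it below -/
import Mathlib

section
/- If y : [0, π] → ℝ is continuously differentiable and y(0) = y(π) = 0, then ∫₀^π y(t)² dt ≤ ∫₀^π y'(t)² dt. -/
open Real intervalIntegral MeasureTheory Set Filter Topology

/-- Wirtinger's inequality: if `y` is continuously differentiable on `[0, π]`
and vanishes at the endpoints, then `∫₀^π y² ≤ ∫₀^π y'²`. -/
theorem wirtinger_basic (y : ℝ → ℝ)
    (hy : ContDiffOn ℝ 1 y (Set.Icc 0 π))
    (h0 : y 0 = 0) (hπ : y π = 0) :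
    ∫ t in (0:ℝ)..π, (y t) ^ 2 ≤ ∫ t in (0:ℝ)..π, (derivWithin y (Set.Icc 0 π) t) ^ 2 := by
  have hpi : (0:ℝ) < π := Real.pi_pos
  set f := derivWithin y (Set.Icc 0 π) with hfdef
  have hud : UniqueDiffOn ℝ (Set.Icc (0:ℝ) π) := uniqueDiffOn_Icc hpi
  have hfc : ContinuousOn f (Set.Icc 0 π) := hy.continuousOn_derivWithin hud le_rfl
  have hyc : ContinuousOn y (Set.Icc 0 π) := hy.continuousOn
  have hyd : ∀ t ∈ Set.Icc (0:ℝ) π, HasDerivWithinAt y (f t) (Set.Icc 0 π) t := fun t ht =>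
    ((hy.differentiableOn one_ne_zero) t ht).hasDerivWithinAt
  set h : ℝ → ℝ := fun t => f t ^ 2 - y t ^ 2 with hhdef
  have hhc : ContinuousOn h (Set.Icc 0 π) := (hfc.pow 2).sub (hyc.pow 2)
  have hint : ∀ a b, a ∈ Set.Icc (0:ℝ) π → b ∈ Set.Icc (0:ℝ) π →
      IntervalIntegrable h volume a b := fun a b ha hb =>
    (hhc.mono (Set.uIcc_subset_Icc ha hb)).intervalIntegrable
  set G : ℝ → ℝ := fun t => y t ^ 2 * Real.cos t / Real.sin t with hGdef
  set F : ℝ → ℝ := fun x => ∫ t in (0:ℝ)..x, h t with hFdef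
  -- key inequality on interior subintervals
  have key : ∀ a b, 0 < a → a ≤ b → b < π → G b - G a ≤ F b - F a := by
    intro a b ha hab hb
    have hsub : Set.Icc a b ⊆ Set.Ioo 0 π := fun t ht =>
      ⟨lt_of_lt_of_le ha ht.1, lt_of_le_of_lt ht.2 hb⟩
    have hsub' : Set.Icc a b ⊆ Set.Icc 0 π := hsub.trans Set.Ioo_subset_Icc_self
    set G' : ℝ → ℝ := fun t =>
      ((2 * y t * f t * Real.cos t + y t ^ 2 * (-Real.sin t)) * Real.sin t
        - y t ^ 2 * Real.cos t * Real.cos t) / Real.sin t ^ 2 with hG'def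
    have hGd : ∀ t ∈ Set.uIcc a b, HasDerivAt G (G' t) t := by
      rw [Set.uIcc_of_le hab]
      intro t ht
      have ht' := hsub ht
      have hsin : Real.sin t ≠ 0 := ne_of_gt (Real.sin_pos_of_pos_of_lt_pi ht'.1 ht'.2)
      have hyt : HasDerivAt y (f t) t :=
        (hyd t (hsub' ht)).hasDerivAt (Icc_mem_nhds ht'.1 ht'.2)
      have h1 : HasDerivAt (fun t => y t ^ 2) (2 * y t * f t) t := by
        simpa [mul_comm, mul_assoc, mul_left_comm] using (show HasDerivAt (fun t => y t ^ 2) _ t from hyt.pow 2)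
      have hnum : HasDerivAt (fun t => y t ^ 2 * Real.cos t)
          (2 * y t * f t * Real.cos t + y t ^ 2 * (-Real.sin t)) t :=
        h1.mul (Real.hasDerivAt_cos t)
      exact hnum.div (Real.hasDerivAt_sin t) hsin
    have hG'c : ContinuousOn G' (Set.uIcc a b) := by
      rw [Set.uIcc_of_le hab]
      apply ContinuousOn.div
      · exact ((((continuousOn_const.mul (hyc.mono hsub')).mul (hfc.mono hsub')).mul
          Real.continuous_cos.continuousOn).add
          (((hyc.mono hsub').pow 2).mul Real.continuous_sin.continuousOn.neg)).mul
          Real.continuous_sin.continuousOn |>.sub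
          ((((hyc.mono hsub').pow 2).mul Real.continuous_cos.continuousOn).mul
            Real.continuous_cos.continuousOn)
      · exact (Real.continuous_sin.continuousOn.pow 2)
      · intro t ht
        exact pow_ne_zero _ (ne_of_gt (Real.sin_pos_of_pos_of_lt_pi (hsub ht).1 (hsub ht).2))
    have hG'int : IntervalIntegrable G' volume a b := hG'c.intervalIntegrable
    have hFTC : ∫ t in a..b, G' t = G b - G a :=
      intervalIntegral.integral_eq_sub_of_hasDerivAt hGd hG'int
    have hhint : IntervalIntegrable h volume a b :=
      hint a b (hsub' ⟨le_rfl, hab⟩) (hsub' ⟨hab, le_rfl⟩)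
    have hpt : ∀ t ∈ Set.Icc a b, 0 ≤ h t - G' t := by
      intro t ht
      have ht' := hsub ht
      have hsin : Real.sin t ≠ 0 := ne_of_gt (Real.sin_pos_of_pos_of_lt_pi ht'.1 ht'.2)
      have : h t - G' t = (f t - y t * Real.cos t / Real.sin t) ^ 2 := by
        simp only [hhdef, hG'def]
        field_simp
        ring
      rw [this]
      positivity
    have hnn : 0 ≤ ∫ t in a..b, (h t - G' t) := by
      apply intervalIntegral.integral_nonneg hab
      exact hpt
    have hsplit : ∫ t in a..b, (h t - G' t) = (∫ t in a..b, h t) - ∫ t in a..b, G' t :=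
      intervalIntegral.integral_sub hhint hG'int
    have hFab : F b - F a = ∫ t in a..b, h t := by
      simp only [hFdef]
      exact intervalIntegral.integral_interval_sub_left
        (hint 0 b ⟨le_rfl, hpi.le⟩ (hsub' ⟨hab, le_rfl⟩))
        (hint 0 a ⟨le_rfl, hpi.le⟩ (hsub' ⟨le_rfl, hab⟩))
    rw [hFab]
    linarith [hnn, hsplit.symm ▸ hnn, hFTC]
  -- the limiting filter
  set L := 𝓝[Set.Ioo (0:ℝ) (π/2)] (0:ℝ) with hLdef
  haveI hLne : L.NeBot := by
    rw [hLdef]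
    apply mem_closure_iff_nhdsWithin_neBot.1
    rw [closure_Ioo (by positivity : (0:ℝ) ≠ π/2)]
    exact ⟨le_rfl, by positivity⟩
  have hmemL : ∀ᶠ t in L, t ∈ Set.Ioo (0:ℝ) (π/2) := self_mem_nhdsWithin
  -- t / sin t → 1 along L
  have hts : Tendsto (fun t => t / Real.sin t) L (𝓝 1) := by
    have h1 : Tendsto (fun t => Real.sin t / t) L (𝓝 1) := by
      have := (Real.hasDerivAt_sin 0)
      rw [hasDerivAt_iff_tendsto_slope] at this
      have hmono : L ≤ 𝓝[≠] (0:ℝ) :=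
        nhdsWithin_mono _ (fun t ht => ne_of_gt ht.1)
      have h2 := this.mono_left hmono
      rw [Real.cos_zero] at h2
      apply h2.congr
      intro t
      simp [slope_def_field, Real.sin_zero]
    have h2 := h1.inv₀ one_ne_zero
    simp only [inv_one] at h2
    apply h2.congr
    intro t
    rw [inv_div]
  -- G → 0 at 0
  have hG0 : Tendsto G L (𝓝 0) := by
    have hslope : Tendsto (fun t => y t / t) L (𝓝 (f 0)) := by
      have := hyd 0 ⟨le_rfl, hpi.le⟩
      rw [hasDerivWithinAt_iff_tendsto_slope] at this
      have hmono : L ≤ 𝓝[Set.Icc 0 π \ {0}] (0:ℝ) := by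
        apply nhdsWithin_mono
        intro t ht
        exact ⟨⟨ht.1.le, le_of_lt (lt_trans ht.2 (by linarith))⟩, ne_of_gt ht.1⟩
      have h2 := this.mono_left hmono
      apply h2.congr
      intro t
      simp [slope_def_field, h0]
    have htc : Tendsto (fun t => t * Real.cos t) L (𝓝 0) := by
      have : Tendsto (fun t : ℝ => t * Real.cos t) (𝓝 0) (𝓝 0) := by
        have := (show Continuous (fun t : ℝ => t * Real.cos t) from continuous_id.mul Real.continuous_cos).tendsto 0
        simpa using this
      exact this.mono_left nhdsWithin_le_nhds
    have hprod : Tendsto (fun x => (y x / x) ^ 2 * (x / Real.sin x * (x * Real.cos x))) L (𝓝 0) := by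
      simpa using ((hslope.pow 2).mul (hts.mul htc))
    apply hprod.congr'
    filter_upwards [hmemL] with t ht
    have htne : t ≠ 0 := ne_of_gt ht.1
    have hsin : Real.sin t ≠ 0 :=
      ne_of_gt (Real.sin_pos_of_pos_of_lt_pi ht.1 (lt_trans ht.2 (by linarith)))
    simp only [hGdef]
    field_simp
  -- map t ↦ π - t
  have hmap : Tendsto (fun t => π - t) L (𝓝[Set.Icc 0 π \ {π}] π) := by
    rw [tendsto_nhdsWithin_iff]
    constructor
    · have : Tendsto (fun t : ℝ => π - t) (𝓝 0) (𝓝 π) := by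
        have := ((continuous_sub_left π).tendsto (0:ℝ))
        simpa using this
      exact this.mono_left nhdsWithin_le_nhds
    · filter_upwards [hmemL] with t ht
      exact ⟨⟨by linarith [ht.2], by linarith [ht.1]⟩, by
        simp only [Set.mem_singleton_iff]; intro hc; linarith [ht.1, hc]⟩
  -- G ∘ (π - ·) → 0
  have hGπ : Tendsto (fun t => G (π - t)) L (𝓝 0) := by
    have hslope : Tendsto (fun t => y (π - t) / ((π - t) - π)) L (𝓝 (f π)) := by
      have := hyd π ⟨hpi.le, le_rfl⟩
      rw [hasDerivWithinAt_iff_tendsto_slope] at this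
      have h2 := this.comp hmap
      apply h2.congr
      intro t
      simp [slope_def_field, hπ, Function.comp]
    have hslope' : Tendsto (fun t => y (π - t) / t) L (𝓝 (-f π)) := by
      have := hslope.neg
      apply this.congr
      intro t
      rw [show π - t - π = -t by ring, div_neg, neg_neg]
    have htc : Tendsto (fun t => t * Real.cos (π - t)) L (𝓝 0) := by
      have : Tendsto (fun t : ℝ => t * Real.cos (π - t)) (𝓝 0) (𝓝 0) := by
        have hc : Continuous (fun t : ℝ => t * Real.cos (π - t)) :=
          continuous_id.mul (Real.continuous_cos.comp (continuous_sub_left π))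
        simpa using hc.tendsto (0:ℝ)
      exact this.mono_left nhdsWithin_le_nhds
    have hprod : Tendsto (fun x => (y (π - x) / x) ^ 2 * (x / Real.sin x * (x * Real.cos (π - x)))) L (𝓝 0) := by
      simpa using ((hslope'.pow 2).mul (hts.mul htc))
    apply hprod.congr'
    filter_upwards [hmemL] with t ht
    have htne : t ≠ 0 := ne_of_gt ht.1
    have hsin : Real.sin (π - t) = Real.sin t := Real.sin_pi_sub t
    have hsint : Real.sin t ≠ 0 :=
      ne_of_gt (Real.sin_pos_of_pos_of_lt_pi ht.1 (lt_trans ht.2 (by linarith)))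
    simp only [hGdef, hsin]
    field_simp
  -- F is continuous on [0, π]
  have hFc : ContinuousOn F (Set.Icc 0 π) := by
    have hIO : IntegrableOn h (Set.uIcc 0 π) volume := by
      rw [Set.uIcc_of_le hpi.le]
      exact hhc.integrableOn_compact isCompact_Icc
    have := intervalIntegral.continuousOn_primitive_interval (f := h) (μ := volume) (a := 0) (b := π) hIO
    rwa [Set.uIcc_of_le hpi.le] at this
  have hF0 : Tendsto F L (𝓝 0) := by
    have := (hFc 0 ⟨le_rfl, hpi.le⟩)
    have h2 : Tendsto F (𝓝[Set.Icc 0 π] 0) (𝓝 (F 0)) := this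
    have hmono : L ≤ 𝓝[Set.Icc 0 π] (0:ℝ) :=
      nhdsWithin_mono _ (fun t ht => ⟨ht.1.le, le_of_lt (lt_trans ht.2 (by linarith))⟩)
    have h3 := h2.mono_left hmono
    have : F 0 = 0 := by simp [hFdef]
    rwa [this] at h3
  have hFπ : Tendsto (fun t => F (π - t)) L (𝓝 (F π)) := by
    have h2 : Tendsto F (𝓝[Set.Icc 0 π] π) (𝓝 (F π)) := hFc π ⟨hpi.le, le_rfl⟩
    have hmap' : Tendsto (fun t => π - t) L (𝓝[Set.Icc 0 π] π) :=
      hmap.mono_right (nhdsWithin_mono _ Set.diff_subset)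
    exact h2.comp hmap'
  -- conclude F π ≥ 0
  have hfin : 0 ≤ F π := by
    have hineq : ∀ᶠ t in L, G (π - t) - G t ≤ F (π - t) - F t := by
      filter_upwards [hmemL] with t ht
      exact key t (π - t) ht.1 (by linarith [ht.2]) (by linarith [ht.1])
    have l1 : Tendsto (fun t => G (π - t) - G t) L (𝓝 0) := by
      have := hGπ.sub hG0; simpa using this
    have l2 : Tendsto (fun t => F (π - t) - F t) L (𝓝 (F π)) := by
      have := hFπ.sub hF0; simpa using this
    exact le_of_tendsto_of_tendsto l1 l2 hineq
  -- unfold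
  have hyint : IntervalIntegrable (fun t => y t ^ 2) volume 0 π := by
    apply ContinuousOn.intervalIntegrable
    rw [Set.uIcc_of_le hpi.le]
    exact hyc.pow 2
  have hfint : IntervalIntegrable (fun t => f t ^ 2) volume 0 π := by
    apply ContinuousOn.intervalIntegrable
    rw [Set.uIcc_of_le hpi.le]
    exact hfc.pow 2
  have hFπeq : F π = (∫ t in (0:ℝ)..π, f t ^ 2) - ∫ t in (0:ℝ)..π, y t ^ 2 := by
    simp only [hFdef, hhdef]
    exact intervalIntegral.integral_sub hfint hyint
  rw [hFπeq] at hfin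
  linarith
end

section
/- If y : [a, b] → ℝ is continuously differentiable with y(a) = y(b) = 0, then ∫ₐᵇ y(t)² dt ≤ ((b−a)/π)² · ∫ₐᵇ y'(t)² dt. -/
open Real intervalIntegral

set_option maxHeartbeats 1000000

/-- Scaled Wirtinger inequality on a general interval `[a, b]`:
if `y` is continuously differentiable on `[a, b]` and vanishes at the endpoints, then
`∫ₐᵇ y² ≤ ((b-a)/π)² ∫ₐᵇ y'²`. -/
theorem wirtinger_scaled (a b : ℝ) (hab : a < b) (y : ℝ → ℝ)
    (hy : ContDiffOn ℝ 1 y (Set.Icc a b))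
    (ha : y a = 0) (hb : y b = 0) :
    ∫ t in a..b, (y t) ^ 2 ≤
      ((b - a) / π) ^ 2 * ∫ t in a..b, (derivWithin y (Set.Icc a b) t) ^ 2 := by
  have hπ : (0:ℝ) < π := Real.pi_pos
  have hba : (0:ℝ) < b - a := sub_pos.2 hab
  set c : ℝ := π / (b - a) with hc_def
  have hc0 : 0 < c := div_pos hπ hba
  have hcb : c * (b - a) = π := div_mul_cancel₀ _ hba.ne'
  set y' : ℝ → ℝ := derivWithin y (Set.Icc a b) with hy'_def
  have hyc : ContinuousOn y (Set.Icc a b) := hy.continuousOn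
  have hy'c : ContinuousOn y' (Set.Icc a b) :=
    hy.continuousOn_derivWithin (uniqueDiffOn_Icc hab) le_rfl
  have hd : ∀ t ∈ Set.Icc a b, HasDerivWithinAt y (y' t) (Set.Icc a b) t := fun t ht =>
    ((hy.differentiableOn one_ne_zero) t ht).hasDerivWithinAt
  have hdIoo : ∀ t ∈ Set.Ioo a b, HasDerivAt y (y' t) t := fun t ht =>
    (hd t (Set.Ioo_subset_Icc_self ht)).hasDerivAt (Icc_mem_nhds ht.1 ht.2)
  -- Lipschitz bound
  obtain ⟨C, hC⟩ := isCompact_Icc.exists_bound_of_continuousOn hy'c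
  have hC0 : 0 ≤ C := le_trans (norm_nonneg _) (hC a (Set.left_mem_Icc.2 hab.le))
  have hylin : ∀ t ∈ Set.Icc a b, |y t| ≤ C * (t - a) := by
    intro t ht
    have h := Convex.norm_image_sub_le_of_norm_hasDerivWithin_le hd hC (convex_Icc a b)
      (Set.left_mem_Icc.2 hab.le) ht
    rw [ha, sub_zero] at h
    simpa [Real.norm_eq_abs, abs_of_nonneg (sub_nonneg.2 ht.1)] using h
  have hylinb : ∀ t ∈ Set.Icc a b, |y t| ≤ C * (b - t) := by
    intro t ht
    have h := Convex.norm_image_sub_le_of_norm_hasDerivWithin_le hd hC (convex_Icc a b)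
      (Set.right_mem_Icc.2 hab.le) ht
    rw [hb, sub_zero] at h
    have habs : |t - b| = b - t := by rw [abs_sub_comm, abs_of_nonneg (sub_nonneg.2 ht.2)]
    simpa [Real.norm_eq_abs, habs] using h
  clear_value c y'
  -- the auxiliary functions
  set q : ℝ → ℝ := fun t => Real.cos (c * (t - a)) / Real.sin (c * (t - a)) with hq_def
  set H : ℝ → ℝ := fun t => c * ((y t) ^ 2 * q t) with hH_def
  set f : ℝ → ℝ := fun t => (y' t) ^ 2 - c ^ 2 * (y t) ^ 2 with hf_def
  set D : ℝ → ℝ := fun t =>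
    2 * c * y t * y' t * q t - c ^ 2 * (y t) ^ 2 * (1 + (q t) ^ 2) with hD_def
  clear_value q H f D
  have hsinpos : ∀ t ∈ Set.Ioo a b, 0 < Real.sin (c * (t - a)) := by
    intro t ht
    apply Real.sin_pos_of_pos_of_lt_pi
    · have h1 : 0 < t - a := sub_pos.2 ht.1
      positivity
    · calc c * (t - a) < c * (b - a) :=
            mul_lt_mul_of_pos_left (by linarith [ht.2]) hc0
        _ = π := hcb
  have hfc : ContinuousOn f (Set.Icc a b) := by
    rw [hf_def]
    exact (hy'c.pow 2).sub (continuousOn_const.mul (hyc.pow 2))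
  -- key inequality on interior subintervals
  have key : ∀ u v : ℝ, u ∈ Set.Ioo a b → v ∈ Set.Ioo a b → u ≤ v →
      H v - H u ≤ ∫ t in u..v, f t := by
    intro u v hu hv huv
    have hsub : Set.Icc u v ⊆ Set.Ioo a b := fun t ht =>
      ⟨lt_of_lt_of_le hu.1 ht.1, lt_of_le_of_lt ht.2 hv.2⟩
    have hIccsub : Set.Icc u v ⊆ Set.Icc a b := hsub.trans Set.Ioo_subset_Icc_self
    have hycc : ContinuousOn y (Set.Icc u v) := hyc.mono hIccsub
    have hy'cc : ContinuousOn y' (Set.Icc u v) := hy'c.mono hIccsub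
    have hqcc : ContinuousOn q (Set.Icc u v) := by
      rw [hq_def]
      apply ContinuousOn.div
      · exact (Real.continuous_cos.comp (by continuity)).continuousOn
      · exact (Real.continuous_sin.comp (by continuity)).continuousOn
      · exact fun t ht => (hsinpos t (hsub ht)).ne'
    have hDcc : ContinuousOn D (Set.Icc u v) := by
      rw [hD_def]
      apply ContinuousOn.sub
      · exact (((continuousOn_const.mul hycc).mul hy'cc).mul hqcc)
      · exact (continuousOn_const.mul (hycc.pow 2)).mul (continuousOn_const.add (hqcc.pow 2))
    have hfint : IntervalIntegrable f MeasureTheory.volume u v :=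
      (hfc.mono hIccsub).intervalIntegrable_of_Icc huv
    have hDint : IntervalIntegrable D MeasureTheory.volume u v :=
      hDcc.intervalIntegrable_of_Icc huv
    have hderiv : ∀ t ∈ Set.uIcc u v, HasDerivAt H (D t) t := by
      intro t ht
      rw [Set.uIcc_of_le huv] at ht
      have htIoo := hsub ht
      have hs0 : Real.sin (c * (t - a)) ≠ 0 := (hsinpos t htIoo).ne'
      have hφ : HasDerivAt (fun t => c * (t - a)) c t := by
        simpa using ((hasDerivAt_id t).sub_const a).const_mul c
      have hq' := hφ.cos.div hφ.sin hs0
      have hq2 : HasDerivAt q (-c * (1 + q t ^ 2)) t := by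
        simp only [hq_def]
        refine hq'.congr_deriv ?_
        symm
        have hpy := Real.sin_sq_add_cos_sq (c * (t - a))
        field_simp
        ring
      have hy2 := (hdIoo t htIoo).pow 2
      have hH' := (hy2.mul hq2).const_mul c
      have heq : D t = c * (↑2 * y t ^ (2 - 1) * y' t * q t + y t ^ 2 * (-c * (1 + q t ^ 2))) := by
        simp only [hD_def]
        push_cast
        ring
      rw [hH_def, heq]
      exact hH'
    have hFTC : ∫ t in u..v, D t = H v - H u :=
      intervalIntegral.integral_eq_sub_of_hasDerivAt hderiv hDint
    have hnn : 0 ≤ ∫ t in u..v, (f t - D t) := by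
      apply intervalIntegral.integral_nonneg huv
      intro t ht
      have hid : f t - D t = (y' t - c * y t * q t) ^ 2 := by
        simp only [hf_def, hD_def]; ring
      rw [hid]; positivity
    have hsplit : ∫ t in u..v, (f t - D t) =
        (∫ t in u..v, f t) - ∫ t in u..v, D t :=
      intervalIntegral.integral_sub hfint hDint
    rw [hsplit, hFTC] at hnn
    linarith
  -- bound on f
  obtain ⟨M, hM⟩ := isCompact_Icc.exists_bound_of_continuousOn hfc
  have hM0 : 0 ≤ M := le_trans (norm_nonneg _) (hM a (Set.left_mem_Icc.2 hab.le))
  -- main nonnegativity of ∫ f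
  have hS : 0 ≤ ∫ t in a..b, f t := by
    refine le_of_forall_pos_le_add ?_
    intro ε hε
    set δ : ℝ := min ((b - a) / 4) (ε / (π * C ^ 2 + 2 * M + 1)) with hδ_def
    have hδpos : 0 < δ := lt_min (by linarith) (div_pos hε (by positivity))
    have hδ4 : δ ≤ (b - a) / 4 := min_le_left _ _
    have hδε : δ * (π * C ^ 2 + 2 * M + 1) ≤ ε := by
      have h1 : δ ≤ ε / (π * C ^ 2 + 2 * M + 1) := min_le_right _ _
      have h2 : (0:ℝ) < π * C ^ 2 + 2 * M + 1 := by positivity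
      calc δ * (π * C ^ 2 + 2 * M + 1)
          ≤ (ε / (π * C ^ 2 + 2 * M + 1)) * (π * C ^ 2 + 2 * M + 1) :=
            mul_le_mul_of_nonneg_right h1 h2.le
        _ = ε := div_mul_cancel₀ _ h2.ne'
    clear_value δ
    set u : ℝ := a + δ with hu_def
    set v : ℝ := b - δ with hv_def
    have hu : u ∈ Set.Ioo a b := ⟨by rw [hu_def]; linarith, by rw [hu_def]; linarith⟩
    have hv : v ∈ Set.Ioo a b := ⟨by rw [hv_def]; linarith, by rw [hv_def]; linarith⟩
    have huv : u ≤ v := by rw [hu_def, hv_def]; linarith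
    clear_value u v
    -- sine lower bound at c*δ
    have hcδhalf : c * δ ≤ π / 2 := by
      have h1 : c * δ ≤ c * ((b - a) / 4) := mul_le_mul_of_nonneg_left hδ4 hc0.le
      have h2 : c * ((b - a) / 4) = π / 4 := by
        rw [hc_def]; field_simp
      linarith
    have hsinδ : 2 / π * (c * δ) ≤ Real.sin (c * δ) :=
      Real.mul_le_sin (by positivity) hcδhalf
    have hsinδpos : 0 < Real.sin (c * δ) := lt_of_lt_of_le (by positivity) hsinδ
    -- boundary values of H are small
    have habs : ∀ t, Real.sin (c * (t - a)) = Real.sin (c * δ) →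
        |y t| ≤ C * δ → |H t| ≤ π / 2 * C ^ 2 * δ := by
      intro t hst hyt
      have hqb : |q t| ≤ π / (2 * (c * δ)) := by
        have h1 : |q t| ≤ 1 / Real.sin (c * δ) := by
          simp only [hq_def]
          rw [abs_div, hst, abs_of_pos hsinδpos]
          gcongr
          exact Real.abs_cos_le_one _
        have h2 : 1 / Real.sin (c * δ) ≤ π / (2 * (c * δ)) := by
          rw [div_le_div_iff₀ hsinδpos (by positivity)]
          calc 1 * (2 * (c * δ)) = π * (2 / π * (c * δ)) := by field_simp
            _ ≤ π * Real.sin (c * δ) := mul_le_mul_of_nonneg_left hsinδ hπ.le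
        linarith
      have hy2b : (y t) ^ 2 ≤ (C * δ) ^ 2 := by
        have := pow_le_pow_left₀ (abs_nonneg (y t)) hyt 2
        rwa [sq_abs] at this
      calc |H t| = c * ((y t) ^ 2 * |q t|) := by
            simp only [hH_def]
            rw [abs_mul, abs_mul, abs_of_pos hc0, abs_of_nonneg (sq_nonneg (y t))]
        _ ≤ c * ((C * δ) ^ 2 * (π / (2 * (c * δ)))) := by
            apply mul_le_mul_of_nonneg_left _ hc0.le
            exact mul_le_mul hy2b hqb (abs_nonneg _) (by positivity)
        _ = π / 2 * C ^ 2 * δ := by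
            field_simp
    have hua : u - a = δ := by rw [hu_def]; ring
    have hbv : b - v = δ := by rw [hv_def]; ring
    have hHu : |H u| ≤ π / 2 * C ^ 2 * δ := by
      apply habs
      · rw [hua]
      · have h := hylin u (Set.Ioo_subset_Icc_self hu)
        rwa [hua] at h
    have hHv : |H v| ≤ π / 2 * C ^ 2 * δ := by
      apply habs
      · have h5 : c * (v - a) = π - c * δ := by
          have : v - a = (b - a) - δ := by linarith [hbv]
          rw [this]
          linear_combination hcb
        rw [h5, Real.sin_pi_sub]
      · have h := hylinb v (Set.Ioo_subset_Icc_self hv)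
        rwa [hbv] at h
    -- splitting the integral
    have hfi1 : IntervalIntegrable f MeasureTheory.volume a u :=
      (hfc.mono (Set.Icc_subset_Icc le_rfl hu.2.le)).intervalIntegrable_of_Icc hu.1.le
    have hfi2 : IntervalIntegrable f MeasureTheory.volume u v :=
      (hfc.mono (Set.Icc_subset_Icc hu.1.le hv.2.le)).intervalIntegrable_of_Icc huv
    have hfi3 : IntervalIntegrable f MeasureTheory.volume v b :=
      (hfc.mono (Set.Icc_subset_Icc hv.1.le le_rfl)).intervalIntegrable_of_Icc hv.2.le
    have hadd1 := intervalIntegral.integral_add_adjacent_intervals hfi1 hfi2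
    have hadd2 := intervalIntegral.integral_add_adjacent_intervals (hfi1.trans hfi2) hfi3
    -- bounds on the small pieces
    have hb1 : |∫ t in a..u, f t| ≤ M * δ := by
      have h := intervalIntegral.norm_integral_le_of_norm_le_const (C := M) (f := f)
        (a := a) (b := u) ?_
      · rw [Real.norm_eq_abs] at h
        rwa [hua, abs_of_pos hδpos] at h
      · intro x hx
        rw [Set.uIoc_of_le hu.1.le] at hx
        exact hM x ⟨hx.1.le, hx.2.trans hu.2.le⟩
    have hb3 : |∫ t in v..b, f t| ≤ M * δ := by
      have h := intervalIntegral.norm_integral_le_of_norm_le_const (C := M) (f := f)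
        (a := v) (b := b) ?_
      · rw [Real.norm_eq_abs] at h
        rwa [show b - v = δ from hbv, abs_of_pos hδpos] at h
      · intro x hx
        rw [Set.uIoc_of_le hv.2.le] at hx
        exact hM x ⟨hv.1.le.trans hx.1.le, hx.2⟩
    have hkey := key u v hu hv huv
    have l1 := (abs_le.1 hb1).1
    have l3 := (abs_le.1 hb3).1
    have lu := (abs_le.1 hHu).2
    have lv := (abs_le.1 hHv).1
    have hexp : δ * (π * C ^ 2 + 2 * M + 1) = (π * C ^ 2 + 2 * M) * δ + δ := by ring
    have hεδ : (π * C ^ 2 + 2 * M) * δ ≤ ε := by linarith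
    linarith [hadd1, hadd2, hkey]
  -- conclude
  have hy2i : IntervalIntegrable (fun t => (y t) ^ 2) MeasureTheory.volume a b :=
    (hyc.pow 2).intervalIntegrable_of_Icc hab.le
  have hy'2i : IntervalIntegrable (fun t => (y' t) ^ 2) MeasureTheory.volume a b :=
    (hy'c.pow 2).intervalIntegrable_of_Icc hab.le
  have hcy2i : IntervalIntegrable (fun t => c ^ 2 * (y t) ^ 2) MeasureTheory.volume a b :=
    hy2i.const_mul _
  have hsplit : ∫ t in a..b, f t =
      (∫ t in a..b, (y' t) ^ 2) - ∫ t in a..b, c ^ 2 * (y t) ^ 2 := by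
    simp only [hf_def]
    exact intervalIntegral.integral_sub hy'2i hcy2i
  have hconst : ∫ t in a..b, c ^ 2 * (y t) ^ 2 = c ^ 2 * ∫ t in a..b, (y t) ^ 2 :=
    intervalIntegral.integral_const_mul _ _
  rw [hsplit, hconst] at hS
  have hone : ((b - a) / π) ^ 2 * c ^ 2 = 1 := by
    rw [hc_def]; field_simp
  have hk0 : (0:ℝ) ≤ ((b - a) / π) ^ 2 := sq_nonneg _
  have h3 := mul_le_mul_of_nonneg_left hS hk0
  have h4 : ((b - a) / π) ^ 2 * ((∫ t in a..b, (y' t) ^ 2) - c ^ 2 * ∫ t in a..b, (y t) ^ 2)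
      = ((b - a) / π) ^ 2 * (∫ t in a..b, (y' t) ^ 2) - ∫ t in a..b, (y t) ^ 2 := by
    linear_combination (-∫ t in a..b, (y t) ^ 2) * hone
  linarith [h3, h4]
end

section
/- Let χ be an even primitive Dirichlet character modulo q with q > 1, let ξ(s,χ) = (q/π)^{s/2} Γ(s/2) L(s,χ), K(χ) = q^{1/2}/G(1,χ), and U(s,χ) = K(χ)^{1/2} ξ(s,χ) (for a fixed choice of square root). Then U(s,χ) = conj(U(conj(s), χ̄)) for all s in the domain of analyticity. -/
open Complex

open scoped Topology in
private lemma diff_conj_conj {f : ℂ → ℂ} (hf : Differentiable ℂ f) :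
    Differentiable ℂ fun s => (starRingEnd ℂ) (f ((starRingEnd ℂ) s)) := by
  intro z
  have hd := (hf ((starRingEnd ℂ) z)).hasDerivAt
  rw [hasDerivAt_iff_tendsto_slope] at hd
  have h1 : Filter.Tendsto (fun w : ℂ => (starRingEnd ℂ) w) (𝓝[≠] z)
      (𝓝[≠] ((starRingEnd ℂ) z)) := by
    refine (Complex.continuous_conj.continuousWithinAt).tendsto_nhdsWithin ?_
    intro w hw hmem
    exact hw ((starRingEnd ℂ).injective hmem)
  have h2 := (Complex.continuous_conj.tendsto _).comp (hd.comp h1)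
  refine HasDerivAt.differentiableAt
    (f' := (starRingEnd ℂ) (deriv f ((starRingEnd ℂ) z)))
    (hasDerivAt_iff_tendsto_slope.mpr (h2.congr fun w => ?_))
  simp [slope_def_field, map_div₀, map_sub, Function.comp]

private lemma LFunction_conj_eq {q : ℕ} [NeZero q] {χ χ' : DirichletCharacter ℂ q}
    (hconj : ∀ a : ZMod q, χ' a = (starRingEnd ℂ) (χ a)) (hχ : χ ≠ 1) (hχ' : χ' ≠ 1) (s : ℂ) :
    (starRingEnd ℂ) (χ.LFunction ((starRingEnd ℂ) s)) = χ'.LFunction s := by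
  have hargn : ∀ n : ℕ, Complex.arg (n : ℂ) ≠ Real.pi := by
    intro n
    rw [← Complex.ofReal_natCast, Complex.arg_ofReal_of_nonneg (Nat.cast_nonneg n)]
    exact Ne.symm Real.pi_ne_zero
  have hana1 : AnalyticOnNhd ℂ (fun s => (starRingEnd ℂ) (χ.LFunction ((starRingEnd ℂ) s)))
      Set.univ :=
    (Complex.analyticOnNhd_univ_iff_differentiable).mpr
      (diff_conj_conj (DirichletCharacter.differentiable_LFunction hχ))
  have hana2 : AnalyticOnNhd ℂ χ'.LFunction Set.univ :=
    (Complex.analyticOnNhd_univ_iff_differentiable).mpr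
      (DirichletCharacter.differentiable_LFunction hχ')
  have key : (fun s => (starRingEnd ℂ) (χ.LFunction ((starRingEnd ℂ) s))) = χ'.LFunction := by
    refine AnalyticOnNhd.eq_of_eventuallyEq hana1 hana2 (z₀ := 2) ?_
    have hopen : IsOpen {s : ℂ | 1 < s.re} := isOpen_lt continuous_const Complex.continuous_re
    have h2 : (2 : ℂ) ∈ {s : ℂ | 1 < s.re} := by norm_num
    filter_upwards [hopen.mem_nhds h2] with s hs
    have hs1 : 1 < s.re := hs
    have hs' : 1 < ((starRingEnd ℂ) s).re := by simpa using hs1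
    rw [DirichletCharacter.LFunction_eq_LSeries χ hs',
      DirichletCharacter.LFunction_eq_LSeries χ' hs1, LSeries, LSeries, starRingEnd_apply,
      tsum_star]
    refine tsum_congr fun n => ?_
    rcases eq_or_ne n 0 with rfl | hn
    · simp [LSeries.term]
    · rw [LSeries.term_of_ne_zero hn, LSeries.term_of_ne_zero hn, ← starRingEnd_apply, map_div₀,
        hconj, Complex.cpow_conj _ _ (hargn n), Complex.conj_conj, map_natCast (starRingEnd ℂ) n]
  exact congrFun key s

/-- Reflection symmetry `U(s,χ) = conj (U(conj s, χ̄))` for the normalised completed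
Dirichlet `L`-function `U(s,χ) = K(χ)^{1/2} ξ(s,χ)`, where
`ξ(s,χ) = (q/π)^{s/2} Γ(s/2) L(s,χ)`, `K(χ) = q^{1/2}/G(1,χ)`, and the square roots
`k, k'` of `K(χ), K(χ̄)` are chosen consistently (`k·k' = 1`). -/
theorem U_conj_symm (q : ℕ) [NeZero q] (hq : 1 < q)
    (χ χ' : DirichletCharacter ℂ q)
    (hconj : ∀ a : ZMod q, χ' a = (starRingEnd ℂ) (χ a))
    (hprim : χ.IsPrimitive) (heven : χ.Even)
    (k k' : ℂ)
    (hk : k ^ 2 = Real.sqrt q /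
      (∑ l ∈ Finset.range q, χ l * Complex.exp (2 * Real.pi * I * l / q)))
    (hk' : k' ^ 2 = Real.sqrt q /
      (∑ l ∈ Finset.range q, χ' l * Complex.exp (2 * Real.pi * I * l / q)))
    (hkk' : k * k' = 1) :
    ∀ s : ℂ,
      k * (((q : ℂ) / Real.pi) ^ (s / 2) * Complex.Gamma (s / 2) * χ.LFunction s)
        = (starRingEnd ℂ)
          (k' * (((q : ℂ) / Real.pi) ^ ((starRingEnd ℂ) s / 2) *
            Complex.Gamma ((starRingEnd ℂ) s / 2) * χ'.LFunction ((starRingEnd ℂ) s))) := by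
  haveI : Fact (1 < q) := ⟨hq⟩
  have hq0 : (q : ℂ) ≠ 0 := Nat.cast_ne_zero.mpr (NeZero.ne q)
  -- χ and χ' are nontrivial
  have hχ : χ ≠ 1 := by
    intro h
    have h1 := hprim
    rw [h, DirichletCharacter.IsPrimitive, DirichletCharacter.conductor_one] at h1
    omega
  have hχ' : χ' ≠ 1 := by
    intro h
    apply hχ
    refine MulChar.ext fun a => ?_
    have h1 := hconj ((a : ZMod q))
    rw [h, MulChar.one_apply_coe] at h1
    have h2 := congrArg (starRingEnd ℂ) h1
    rw [map_one, Complex.conj_conj] at h2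
    rw [MulChar.one_apply_coe, ← h2]
  -- value of χ at 0
  have h0 : χ (0 : ZMod q) = 0 := by
    rw [MulChar.map_nonunit]
    rw [isUnit_zero_iff]
    exact zero_ne_one
  -- the conjugated Gauss sum
  set F : ℕ → ℂ := fun m => χ (m : ZMod q) * Complex.exp (2 * Real.pi * I * m / q) with hF
  have hG : (starRingEnd ℂ)
      (∑ l ∈ Finset.range q, χ' l * Complex.exp (2 * Real.pi * I * l / q))
      = ∑ l ∈ Finset.range q, χ l * Complex.exp (2 * Real.pi * I * l / q) := by
    rw [map_sum]
    have step1 : ∀ l ∈ Finset.range q,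
        (starRingEnd ℂ) (χ' (l : ZMod q) * Complex.exp (2 * Real.pi * I * l / q))
          = χ (l : ZMod q) * Complex.exp (-(2 * Real.pi * I * l / q)) := by
      intro l _
      rw [map_mul, hconj, Complex.conj_conj, ← Complex.exp_conj]
      congr 2
      simp only [map_div₀, map_mul, Complex.conj_I, Complex.conj_ofReal, map_natCast,
        map_ofNat]
      ring
    rw [Finset.sum_congr rfl step1]
    have hterm : ∀ j ∈ Finset.range q,
        χ (((q - 1 - j : ℕ)) : ZMod q) * Complex.exp (-(2 * Real.pi * I * (q - 1 - j : ℕ) / q))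
          = F (j + 1) := by
      intro j hj
      rw [Finset.mem_range] at hj
      have hsum : (q - 1 - j) + (j + 1) = q := by omega
      have hcast : ((q - 1 - j : ℕ) : ZMod q) = -(((j + 1 : ℕ) : ZMod q)) := by
        have h1 := congrArg (Nat.cast : ℕ → ZMod q) hsum
        push_cast at h1 ⊢
        rw [ZMod.natCast_self] at h1
        linear_combination h1
      have hcast2 : ((q - 1 - j : ℕ) : ℂ) = (q : ℂ) - ((j : ℂ) + 1) := by
        have h1 := congrArg (Nat.cast : ℕ → ℂ) hsum
        push_cast at h1
        linear_combination h1
      rw [hcast, hF]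
      have hχeven : χ (-(((j + 1 : ℕ)) : ZMod q)) = χ (((j + 1 : ℕ)) : ZMod q) := by
        rw [show (-(((j + 1 : ℕ)) : ZMod q)) = (-1) * (((j + 1 : ℕ)) : ZMod q) by ring,
          map_mul, heven, one_mul]
      push_cast at hχeven ⊢
      rw [hχeven]
      congr 1
      rw [hcast2, show -(2 * (Real.pi : ℂ) * I * ((q : ℂ) - ((j : ℂ) + 1)) / q)
          = 2 * (Real.pi : ℂ) * I * ((j : ℂ) + 1) / q - 2 * Real.pi * I by
        field_simp; ring]
      rw [Complex.exp_sub, Complex.exp_two_pi_mul_I, div_one]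
    calc ∑ l ∈ Finset.range q, χ (l : ZMod q) * Complex.exp (-(2 * Real.pi * I * l / q))
        = ∑ j ∈ Finset.range q, F (j + 1) := by
          rw [← Finset.sum_range_reflect]
          exact Finset.sum_congr rfl hterm
      _ = ∑ l ∈ Finset.range q, F l := by
          have e1 := Finset.sum_range_succ' F q
          have e2 := Finset.sum_range_succ F q
          have hf0 : F 0 = 0 := by simp [hF, h0]
          have hfq : F q = 0 := by simp [hF, ZMod.natCast_self, h0]
          have e3 := e1.symm.trans e2
          rw [hf0, hfq, add_zero, add_zero] at e3
          exact e3
  -- conj k' = k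
  have h2 : ((starRingEnd ℂ) k') ^ 2 = k ^ 2 := by
    rw [← map_pow, hk', map_div₀, Complex.conj_ofReal, hG, hk]
  have hkey : (starRingEnd ℂ) k' = k := by
    have hcase : (starRingEnd ℂ) k' = k ∨ (starRingEnd ℂ) k' = -k := by
      have hfac : ((starRingEnd ℂ) k' - k) * ((starRingEnd ℂ) k' + k) = 0 := by
        linear_combination h2
      rcases mul_eq_zero.mp hfac with h | h
      · exact Or.inl (by linear_combination h)
      · exact Or.inr (by linear_combination h)
    rcases hcase with h | h
    · exact h
    · exfalso
      have hc := congrArg (starRingEnd ℂ) hkk'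
      rw [map_mul, map_one, h] at hc
      have hm : k * (starRingEnd ℂ) k = -1 := by linear_combination -hc
      rw [Complex.mul_conj] at hm
      have hns : Complex.normSq k = -1 := by exact_mod_cast hm
      nlinarith [Complex.normSq_nonneg k]
  -- the positive real base
  have hbase : ((q : ℂ) / (Real.pi : ℂ)) = (((q : ℝ) / Real.pi : ℝ) : ℂ) := by push_cast; ring
  have harg : ((q : ℂ) / (Real.pi : ℂ)).arg ≠ Real.pi := by
    rw [hbase, Complex.arg_ofReal_of_nonneg (by positivity)]
    exact Ne.symm Real.pi_ne_zero
  intro s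
  have hP : (starRingEnd ℂ) (((q : ℂ) / Real.pi) ^ ((starRingEnd ℂ) s / 2))
      = ((q : ℂ) / Real.pi) ^ (s / 2) := by
    have hd : (starRingEnd ℂ) s / 2 = (starRingEnd ℂ) (s / 2) := by
      rw [map_div₀, map_ofNat]
    rw [hd, Complex.cpow_conj _ _ harg, Complex.conj_conj]
    congr 1
    rw [hbase, Complex.conj_ofReal]
  have hΓ : (starRingEnd ℂ) (Complex.Gamma ((starRingEnd ℂ) s / 2))
      = Complex.Gamma (s / 2) := by
    have hd : (starRingEnd ℂ) s / 2 = (starRingEnd ℂ) (s / 2) := by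
      rw [map_div₀, map_ofNat]
    rw [hd, Complex.Gamma_conj, Complex.conj_conj]
  have hL : (starRingEnd ℂ) (χ'.LFunction ((starRingEnd ℂ) s)) = χ.LFunction s := by
    have h1 := LFunction_conj_eq hconj hχ hχ' ((starRingEnd ℂ) s)
    rw [Complex.conj_conj] at h1
    rw [← h1, Complex.conj_conj]
  rw [map_mul, map_mul, map_mul, hkey, hP, hΓ, hL]
end

section
/- Let χ be an even primitive Dirichlet character modulo q > 1, let ξ(s,χ) = (q/π)^{s/2} Γ(s/2) L(s,χ), K(χ) = q^{1/2}/G(1,χ) and U(s,χ) = K(χ)^{1/2} ξ(s,χ). Then for all real t, U(1/2 + it, χ) is real. -/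
open Complex

open ComplexConjugate in
private lemma differentiable_conj_conj' {f : ℂ → ℂ} (hf : Differentiable ℂ f) :
    Differentiable ℂ fun z => (starRingEnd ℂ) (f ((starRingEnd ℂ) z)) := by
  intro z
  have h0 : Filter.Tendsto (slope f (conj z)) (nhdsWithin (conj z) {conj z}ᶜ)
      (nhds (deriv f (conj z))) :=
    hasDerivAt_iff_tendsto_slope.mp (hf (conj z)).hasDerivAt
  have hc : Filter.Tendsto (fun w : ℂ => conj w) (nhdsWithin z {z}ᶜ)
      (nhdsWithin (conj z) {conj z}ᶜ) := by
    refine Filter.Tendsto.inf (Complex.continuous_conj.tendsto z) ?_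
    rw [Filter.tendsto_principal_principal]
    intro a ha
    simp only [Set.mem_compl_iff, Set.mem_singleton_iff] at ha ⊢
    exact fun h => ha (by simpa using congrArg (starRingEnd ℂ) h)
  have h1 : Filter.Tendsto (fun w => conj (slope f (conj z) (conj w)))
      (nhdsWithin z {z}ᶜ) (nhds (conj (deriv f (conj z)))) :=
    (Complex.continuous_conj.tendsto _).comp (h0.comp hc)
  have h2 : HasDerivAt (fun z => conj (f (conj z))) (conj (deriv f (conj z))) z := by
    rw [hasDerivAt_iff_tendsto_slope]
    refine h1.congr fun w => ?_
    simp only [slope_def_field, map_div₀, map_sub, Complex.conj_conj]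
  exact h2.differentiableAt

open ComplexConjugate in
private lemma LFunction_conj_conj' {q : ℕ} [NeZero q] (χ χ' : DirichletCharacter ℂ q)
    (hχ : χ ≠ 1) (hχ' : χ' ≠ 1)
    (hconj : ∀ a : ZMod q, χ' a = conj (χ a)) (s : ℂ) :
    conj (χ.LFunction (conj s)) = χ'.LFunction s := by
  have hg : Differentiable ℂ (fun w => conj (χ.LFunction (conj w))) :=
    differentiable_conj_conj' (DirichletCharacter.differentiable_LFunction hχ)
  have hf : Differentiable ℂ χ'.LFunction := DirichletCharacter.differentiable_LFunction hχ'
  have hev : (fun w => conj (χ.LFunction (conj w))) =ᶠ[nhds (2:ℂ)] χ'.LFunction := by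
    have hU : {w : ℂ | 1 < w.re} ∈ nhds (2 : ℂ) :=
      (isOpen_lt continuous_const Complex.continuous_re).mem_nhds (by norm_num)
    filter_upwards [hU] with w hw
    have hw' : 1 < (conj w).re := by simpa using hw
    rw [DirichletCharacter.LFunction_eq_LSeries χ hw',
      DirichletCharacter.LFunction_eq_LSeries χ' hw, LSeries, LSeries]
    have hmap := Complex.conjCLE.map_tsum (L := SummationFilter.unconditional ℕ)
      (f := fun n => LSeries.term (fun n => χ (n : ZMod q)) (conj w) n)
    simp only [Complex.conjCLE_apply] at hmap
    rw [hmap]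
    refine tsum_congr fun n => ?_
    rcases eq_or_ne n 0 with rfl | hn
    · simp [LSeries.term]
    · rw [LSeries.term_of_ne_zero hn, LSeries.term_of_ne_zero hn, map_div₀, ← hconj]
      congr 1
      have harg : ((n : ℂ)).arg ≠ Real.pi := by
        rw [Complex.natCast_arg]
        exact Ne.symm Real.pi_ne_zero
      have h := Complex.conj_cpow (n : ℂ) w harg
      rw [Complex.conj_natCast] at h
      exact h.symm
  have hgA : AnalyticOnNhd ℂ (fun w => conj (χ.LFunction (conj w))) Set.univ :=
    hg.differentiableOn.analyticOnNhd isOpen_univ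
  have hfA : AnalyticOnNhd ℂ χ'.LFunction Set.univ :=
    hf.differentiableOn.analyticOnNhd isOpen_univ
  have := AnalyticOnNhd.eq_of_eventuallyEq hgA hfA hev
  exact congrFun this s

/-- For an even primitive Dirichlet character `χ` mod `q > 1`, with
`ξ(s,χ) = (q/π)^{s/2} Γ(s/2) L(s,χ)`, `K(χ) = q^{1/2}/G(1,χ)` and
`U(s,χ) = K(χ)^{1/2} ξ(s,χ)` (square roots of `K(χ)`, `K(χ̄)` chosen consistently),
the value `U(1/2 + it, χ)` is real for every real `t`. -/
theorem U_half_line_real (q : ℕ) [NeZero q] (hq : 1 < q)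
    (χ χ' : DirichletCharacter ℂ q)
    (hconj : ∀ a : ZMod q, χ' a = (starRingEnd ℂ) (χ a))
    (hprim : χ.IsPrimitive) (heven : χ.Even)
    (k k' : ℂ)
    (hk : k ^ 2 = Real.sqrt q /
      (∑ l ∈ Finset.range q, χ l * Complex.exp (2 * Real.pi * I * l / q)))
    (hk' : k' ^ 2 = Real.sqrt q /
      (∑ l ∈ Finset.range q, χ' l * Complex.exp (2 * Real.pi * I * l / q)))
    (hkk' : k * k' = 1) :
    ∀ t : ℝ,
      (k * (((q : ℂ) / Real.pi) ^ ((1 / 2 + t * I) / 2) *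
        Complex.Gamma ((1 / 2 + t * I) / 2) * χ.LFunction (1 / 2 + t * I))).im = 0 := by
  intro t
  set s : ℂ := 1 / 2 + (t : ℂ) * I with hs_def
  have hq0 : (q : ℂ) ≠ 0 := Nat.cast_ne_zero.mpr (NeZero.ne q)
  have hq1 : q ≠ 1 := by omega
  have hk0 : k ≠ 0 := left_ne_zero_of_mul_eq_one hkk'
  have hk'0 : k' ≠ 0 := right_ne_zero_of_mul_eq_one hkk'
  -- χ is nontrivial
  have hχ1 : χ ≠ 1 := by
    intro h
    have h1 : χ.conductor = 1 := h ▸ DirichletCharacter.conductor_one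
    rw [hprim] at h1
    exact hq1 h1
  -- χ' = χ⁻¹
  have hinv : χ⁻¹ = χ' := by
    refine (MulChar.ext' fun a => ?_).symm
    rw [hconj a, ← MulChar.star_apply' χ a]
    rfl
  have hχ'1 : χ' ≠ 1 := by
    intro h
    rw [← hinv] at h
    exact hχ1 (by rw [← inv_inv χ, h, inv_one])
  -- χ' is even
  have hχ'even : χ'.Even := by
    show χ' (-1) = 1
    rw [hconj, heven, map_one]
  -- the explicit sums are Gauss sums
  have hsum : ∀ ψ : DirichletCharacter ℂ q,
      (∑ l ∈ Finset.range q, ψ l * Complex.exp (2 * Real.pi * I * l / q))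
        = gaussSum ψ ZMod.stdAddChar := by
    intro ψ
    rw [gaussSum]
    refine Finset.sum_nbij' (fun l => (l : ZMod q)) (fun a => a.val) ?_ ?_ ?_ ?_ ?_
    · intro a _; exact Finset.mem_univ _
    · intro a _; exact Finset.mem_range.mpr a.val_lt
    · intro a ha; exact ZMod.val_cast_of_lt (Finset.mem_range.mp ha)
    · intro a _; exact ZMod.natCast_zmod_val a
    · intro l _
      congr 1
      have := ZMod.stdAddChar_coe (N := q) (l : ℤ)
      push_cast at this ⊢
      rw [this]
  have hSk : k ^ 2 = (Real.sqrt q : ℂ) / gaussSum χ ZMod.stdAddChar := by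
    rw [hk, hsum χ]
  have hSk' : k' ^ 2 = (Real.sqrt q : ℂ) / gaussSum χ' ZMod.stdAddChar := by
    rw [hk', hsum χ']
  have hG0 : gaussSum χ ZMod.stdAddChar ≠ 0 := by
    intro h
    rw [h, div_zero, pow_eq_zero_iff two_ne_zero] at hSk
    exact hk0 hSk
  -- conjugate of the Gauss sum
  have hGconj : (starRingEnd ℂ) (gaussSum χ ZMod.stdAddChar)
      = gaussSum χ' ZMod.stdAddChar := by
    rw [gaussSum, map_sum, gaussSum,
      ← Equiv.sum_comp (Equiv.neg (ZMod q)) (fun a => χ' a * ZMod.stdAddChar a)]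
    refine Finset.sum_congr rfl fun a _ => ?_
    simp only [Equiv.neg_apply]
    rw [map_mul, ← hconj]
    congr 1
    · rw [show (-a : ZMod q) = (-1) * a by ring, map_mul, hχ'even, one_mul]
    · rw [AddChar.map_neg_eq_inv]
      have habs : ‖(ZMod.stdAddChar a : ℂ)‖ = 1 := by
        rw [ZMod.stdAddChar_apply]
        exact Circle.norm_coe _
      exact (Complex.inv_eq_conj habs).symm
  -- conj k = k'
  have hconjk2 : ((starRingEnd ℂ) k) ^ 2 = k' ^ 2 := by
    rw [← map_pow, hSk, map_div₀, hGconj, Complex.conj_ofReal, ← hSk']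
  have hkconj : (starRingEnd ℂ) k = k' := by
    have h2 : ((starRingEnd ℂ) k - k') * ((starRingEnd ℂ) k + k') = 0 := by
      have := hconjk2
      ring_nf
      ring_nf at this
      linear_combination this
    rcases mul_eq_zero.mp h2 with h | h
    · exact sub_eq_zero.mp h
    · exfalso
      have hneg : (starRingEnd ℂ) k = -k' := by linear_combination h
      have : k * (starRingEnd ℂ) k = -1 := by
        rw [hneg]
        linear_combination -hkk'
      rw [Complex.mul_conj] at this
      have h3 : (Complex.normSq k : ℝ) = -1 := by
        have := congrArg Complex.re this
        simpa using this
      nlinarith [Complex.normSq_nonneg k]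
  -- root number
  have hq12 : ((q : ℂ)) ^ (1/2 : ℂ) = (Real.sqrt q : ℂ) := by
    rw [show ((q : ℂ)) = ((q : ℝ) : ℂ) by norm_cast,
      show (1/2 : ℂ) = ((1/2 : ℝ) : ℂ) by norm_num,
      ← Complex.ofReal_cpow (by positivity) (1/2 : ℝ), ← Real.sqrt_eq_rpow]
  have hsq0 : (Real.sqrt q : ℂ) ≠ 0 := by
    simp only [ne_eq, Complex.ofReal_eq_zero]
    positivity
  have hroot : DirichletCharacter.rootNumber χ
      = gaussSum χ ZMod.stdAddChar / (Real.sqrt q : ℂ) := by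
    rw [DirichletCharacter.rootNumber, if_pos heven, pow_zero, div_one, hq12]
  -- k' = k * rootNumber χ
  have hε : k' = k * DirichletCharacter.rootNumber χ := by
    have h1 : k * (k * DirichletCharacter.rootNumber χ) = k * k' := by
      rw [hkk', ← mul_assoc, ← pow_two, hSk, hroot]
      field_simp
    exact (mul_left_cancel₀ hk0 h1).symm
  have hroot0 : DirichletCharacter.rootNumber χ ≠ 0 := by
    rw [hroot]
    exact div_ne_zero hG0 hsq0
  -- basic facts about s
  have hcs : (starRingEnd ℂ) s = 1 - s := by
    apply Complex.ext <;> simp [hs_def] <;> norm_num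
  have hres : (0:ℝ) < (s/2).re := by
    simp [hs_def, Complex.div_re]
  have hres' : (0:ℝ) < ((1 - s)/2).re := by
    simp [hs_def, Complex.div_re, Complex.sub_re]
    norm_num
  -- ξ in terms of completed L-function
  have hxi : ∀ (ψ : DirichletCharacter ℂ q), ψ.Even → ∀ (w : ℂ), 0 < (w/2).re →
      ((q : ℂ) / (Real.pi : ℂ)) ^ (w/2) * Complex.Gamma (w/2) * ψ.LFunction w
        = (q : ℂ) ^ (w/2) * DirichletCharacter.completedLFunction ψ w := by
    intro ψ hψe w hw
    have hΓ : Complex.Gamma (w/2) ≠ 0 := Complex.Gamma_ne_zero_of_re_pos hw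
    have hπ0 : (Real.pi : ℂ) ≠ 0 := Complex.ofReal_ne_zero.mpr Real.pi_ne_zero
    have hargπ : ((Real.pi : ℂ)).arg ≠ Real.pi := by
      rw [Complex.arg_ofReal_of_nonneg Real.pi_pos.le]
      exact Ne.symm Real.pi_ne_zero
    have hπc : ((Real.pi : ℂ)) ^ (-w/2) ≠ 0 := by
      rw [Ne, Complex.cpow_eq_zero_iff]
      exact fun h => hπ0 h.1
    rw [DirichletCharacter.LFunction_eq_completed_div_gammaFactor _ _ (Or.inr hq1),
      hψe.gammaFactor_def, Complex.Gammaℝ_def]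
    have hsplit : ((q : ℂ)/(Real.pi : ℂ)) ^ (w/2)
        = (q : ℂ) ^ (w/2) * ((Real.pi : ℂ)) ^ (-w/2) := by
      rw [div_eq_mul_inv,
        show ((q : ℂ) * (Real.pi : ℂ)⁻¹) = ((q : ℝ) : ℂ) * ((((Real.pi)⁻¹ : ℝ)) : ℂ) by push_cast; ring,
        Complex.mul_cpow_ofReal_nonneg (by positivity) (by positivity)]
      congr 1
      rw [Complex.ofReal_inv, Complex.inv_cpow _ _ hargπ, neg_div, Complex.cpow_neg]
    rw [hsplit]
    field_simp
  -- reduce to conjugation identity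
  rw [← Complex.conj_eq_iff_im]
  -- conjugates of the factors
  have hL : (starRingEnd ℂ) (χ.LFunction s) = χ'.LFunction (1 - s) := by
    have h := LFunction_conj_conj' χ χ' hχ1 hχ'1 hconj ((starRingEnd ℂ) s)
    rw [Complex.conj_conj] at h
    rw [h, hcs]
  have hbase : (starRingEnd ℂ) ((q : ℂ)/(Real.pi : ℂ)) = (q : ℂ)/(Real.pi : ℂ) := by
    rw [map_div₀, Complex.conj_natCast, Complex.conj_ofReal]
  have hargqπ : ((q : ℂ)/(Real.pi : ℂ)).arg ≠ Real.pi := by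
    rw [show ((q : ℂ)/(Real.pi : ℂ)) = (((q / Real.pi : ℝ)) : ℂ) by push_cast; ring,
      Complex.arg_ofReal_of_nonneg (by positivity)]
    exact Ne.symm Real.pi_ne_zero
  have hhalfconj : (starRingEnd ℂ) (s/2) = (1 - s)/2 := by
    rw [map_div₀, hcs, map_ofNat]
  have hCpow : (starRingEnd ℂ) (((q : ℂ)/(Real.pi : ℂ)) ^ (s/2))
      = ((q : ℂ)/(Real.pi : ℂ)) ^ ((1 - s)/2) := by
    have h := Complex.conj_cpow ((q : ℂ)/(Real.pi : ℂ)) ((starRingEnd ℂ) (s/2)) hargqπ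
    rw [Complex.conj_conj, hbase] at h
    rw [← h, hhalfconj]
  have hΓc : (starRingEnd ℂ) (Complex.Gamma (s/2)) = Complex.Gamma ((1 - s)/2) := by
    rw [← Complex.Gamma_conj, hhalfconj]
  rw [map_mul, map_mul, map_mul, hCpow, hΓc, hL, hkconj]
  rw [hxi χ' hχ'even (1 - s) hres', hxi χ heven s hres]
  -- functional equation
  have hFE := hprim.completedLFunction_one_sub (1 - s)
  rw [show (1 : ℂ) - (1 - s) = s by ring, hinv] at hFE
  rw [hFE, hε]
  have hpow : (q : ℂ) ^ (s/2) * (q : ℂ) ^ ((1 - s) - 1/2) = (q : ℂ) ^ ((1 - s)/2) := by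
    rw [← Complex.cpow_add _ _ hq0]
    congr 1
    ring
  rw [← hpow]
  ring
end

section
/- For p prime, ∫₀¹ |1 − e(θ)/√p|^{−6} dθ = (1 + 4/p + 1/p²)(1 − 1/p)^{−5}, where e(θ) = exp(2πiθ). -/
open Complex MeasureTheory

lemma cast_choose_three (m : ℕ) : ((m.choose 3 : ℕ) : ℝ) = m*(m-1)*(m-2)/6 := by
  induction m with
  | zero => simp
  | succ n ih =>
      rw [Nat.choose_succ_succ' n 2, Nat.cast_add, Nat.cast_choose_two, ih]
      push_cast
      ring

lemma cast_choose_four (m : ℕ) : ((m.choose 4 : ℕ) : ℝ) = m*(m-1)*(m-2)*(m-3)/24 := by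
  induction m with
  | zero => simp
  | succ n ih =>
      rw [Nat.choose_succ_succ' n 3, Nat.cast_add, cast_choose_three, ih]
      push_cast
      ring

lemma series_sum {r : ℝ} (h0 : 0 ≤ r) (h1 : r < 1) :
    HasSum (fun n : ℕ => (((n+2).choose 2 : ℕ) : ℝ)^2 * r^n)
      ((1 + 4*r + r^2) / (1-r)^5) := by
  have hr : ‖r‖ < 1 := by rwa [Real.norm_eq_abs, _root_.abs_of_nonneg h0]
  have ha := hasSum_choose_mul_geometric_of_norm_lt_one 4 hr
  have hb : HasSum (fun n : ℕ => (((n+3).choose 4 : ℕ):ℝ) * r^n) (r * (1/(1-r)^5)) := by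
    refine (hasSum_nat_add_iff' (f := fun n : ℕ => (((n+3).choose 4 : ℕ):ℝ) * r^n) 1).mp ?_
    have hfun : (fun n : ℕ => (((n+1+3).choose 4 : ℕ):ℝ) * r^(n+1))
        = fun n : ℕ => r * ((((n+4).choose 4 : ℕ):ℝ) * r^n) := by
      funext n
      rw [show n+1+3 = n+4 by ring]
      ring
    rw [hfun]
    simpa using ha.mul_left r
  have hc : HasSum (fun n : ℕ => (((n+2).choose 4 : ℕ):ℝ) * r^n) (r^2 * (1/(1-r)^5)) := by
    refine (hasSum_nat_add_iff' (f := fun n : ℕ => (((n+2).choose 4 : ℕ):ℝ) * r^n) 2).mp ?_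
    have hfun : (fun n : ℕ => (((n+2+2).choose 4 : ℕ):ℝ) * r^(n+2))
        = fun n : ℕ => r^2 * ((((n+4).choose 4 : ℕ):ℝ) * r^n) := by
      funext n
      rw [show n+2+2 = n+4 by ring]
      ring
    rw [hfun]
    have : (∑ i ∈ Finset.range 2, (((i+2).choose 4 : ℕ):ℝ) * r^i) = 0 := by
      simp [Finset.sum_range_succ, Nat.choose_eq_zero_of_lt]
    rw [this, sub_zero]
    exact ha.mul_left (r^2)
  have hcomb := (ha.add (hb.mul_left 4)).add hc
  have h1r : (1 - r) ≠ 0 := by linarith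
  have hfun : (fun n : ℕ => ((((n+4).choose 4 : ℕ):ℝ) * r^n + 4 * ((((n+3).choose 4 : ℕ):ℝ) * r^n))
        + (((n+2).choose 4 : ℕ):ℝ) * r^n)
      = fun n : ℕ => (((n+2).choose 2 : ℕ) : ℝ)^2 * r^n := by
    funext n
    rw [cast_choose_four, cast_choose_four, cast_choose_four, Nat.cast_choose_two]
    push_cast
    ring
  rw [hfun] at hcomb
  convert hcomb using 1
  · rfl
  field_simp
  ring

lemma int_exp (k : ℤ) :
    (∫ θ in (0:ℝ)..1, Complex.exp ((k : ℂ) * (2 * Real.pi * I) * θ))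
      = if k = 0 then 1 else 0 := by
  by_cases hk : k = 0
  · simp [hk]
  · have hc : (k : ℂ) * (2 * Real.pi * I) ≠ 0 := by
      apply mul_ne_zero
      · exact_mod_cast hk
      · simp [Real.pi_ne_zero, I_ne_zero]
    rw [integral_exp_mul_complex hc]
    simp [hk, Complex.exp_int_mul_two_pi_mul_I]

set_option maxHeartbeats 2000000 in
/-- For `p` prime, `∫₀¹ |1 - e(θ)/√p|^{-6} dθ = (1 + 4/p + 1/p²)(1 - 1/p)^{-5}`. -/
theorem integral_abs_pow_six (p : ℕ) (hp : p.Prime) :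
    (∫ θ in (0:ℝ)..1,
        (‖(1 - Complex.exp (2 * Real.pi * I * θ) / Real.sqrt p : ℂ)‖ ^ 6)⁻¹)
      = (1 + 4 / (p : ℝ) + 1 / (p : ℝ) ^ 2) * ((1 - 1 / (p : ℝ)) ^ 5)⁻¹ := by
  have hp1 : (1:ℝ) < p := by exact_mod_cast hp.one_lt
  have hp0 : (0:ℝ) < p := by linarith
  set sp : ℝ := Real.sqrt (p:ℝ) with hsp_def
  have hsp1 : 1 < sp := by
    rw [hsp_def, show (1:ℝ) = Real.sqrt 1 by simp]
    exact Real.sqrt_lt_sqrt (by norm_num) hp1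
  have hsp0 : 0 < sp := by linarith
  set q : ℝ := sp⁻¹ with hq_def
  have hq0 : 0 < q := inv_pos.mpr hsp0
  have hq1 : q < 1 := by
    rw [hq_def]
    exact inv_lt_one_of_one_lt₀ hsp1
  have hqsq : q^2 = 1/(p:ℝ) := by
    rw [hq_def, inv_pow, hsp_def, Real.sq_sqrt hp0.le, one_div]
  -- the function w
  set w : ℝ → ℂ := fun θ : ℝ => Complex.exp (2 * Real.pi * I * θ) / (sp : ℂ) with hw_def
  have hwfold : ∀ θ : ℝ, Complex.exp (2 * Real.pi * I * (θ:ℂ)) / (sp : ℂ) = w θ := fun θ => rfl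
  have hwn : ∀ θ : ℝ, ‖w θ‖ = q := by
    intro θ
    rw [hw_def]
    simp only
    rw [norm_div]
    have h1 : (2 * (Real.pi:ℂ) * I * (θ:ℂ)) = ((2 * Real.pi * θ : ℝ) : ℂ) * I := by
      push_cast
      ring
    rw [h1, Complex.norm_exp_ofReal_mul_I, Complex.norm_real,
      Real.norm_eq_abs, abs_of_pos hsp0, hq_def, one_div]
  have hwcn : ∀ θ : ℝ, ‖(starRingEnd ℂ) (w θ)‖ = q := by
    intro θ
    rw [Complex.norm_conj, hwn]
  -- one-variable sums
  have hA : ∀ θ : ℝ, HasSum (fun n : ℕ => ((((n+2).choose 2 : ℕ)):ℂ) * (w θ)^n)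
      (1/(1 - w θ)^3) := by
    intro θ
    have := hasSum_choose_mul_geometric_of_norm_lt_one (𝕜 := ℂ) 2 (r := w θ)
      (by rw [hwn]; exact hq1)
    simpa using this
  have hB : ∀ θ : ℝ, HasSum (fun n : ℕ => ((((n+2).choose 2 : ℕ)):ℂ) * ((starRingEnd ℂ) (w θ))^n)
      (1/(1 - (starRingEnd ℂ) (w θ))^3) := by
    intro θ
    have := hasSum_choose_mul_geometric_of_norm_lt_one (𝕜 := ℂ) 2 (r := (starRingEnd ℂ) (w θ))
      (by rw [hwcn]; exact hq1)
    simpa using this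
  -- summability of norms
  have hq_norm : ‖q‖ < 1 := by rwa [Real.norm_eq_abs, abs_of_pos hq0]
  have hSnorm : Summable (fun n : ℕ => (((n+2).choose 2 : ℕ):ℝ) * q^n) :=
    summable_choose_mul_geometric_of_norm_lt_one 2 hq_norm
  have hnormA : ∀ θ : ℝ, (fun n : ℕ => ‖((((n+2).choose 2 : ℕ)):ℂ) * (w θ)^n‖)
      = fun n : ℕ => (((n+2).choose 2 : ℕ):ℝ) * q^n := by
    intro θ
    funext n
    rw [norm_mul, norm_pow, hwn]
    norm_num
  have hnormB : ∀ θ : ℝ, (fun n : ℕ => ‖((((n+2).choose 2 : ℕ)):ℂ) * ((starRingEnd ℂ) (w θ))^n‖)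
      = fun n : ℕ => (((n+2).choose 2 : ℕ):ℝ) * q^n := by
    intro θ
    funext n
    rw [norm_mul, norm_pow, hwcn]
    norm_num
  -- the double-indexed family
  set F : ℕ × ℕ → ℝ → ℂ := fun mn θ =>
    (((mn.1+2).choose 2 : ℕ):ℂ) * (w θ)^mn.1 *
      ((((mn.2+2).choose 2 : ℕ):ℂ) * ((starRingEnd ℂ) (w θ))^mn.2) with hF_def
  have hF : ∀ θ : ℝ, HasSum (fun mn : ℕ × ℕ => F mn θ)
      ((((‖1 - w θ‖)^6)⁻¹ : ℝ) : ℂ) := by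
    intro θ
    have hsummul : Summable (fun mn : ℕ × ℕ =>
        ((((mn.1+2).choose 2 : ℕ)):ℂ) * (w θ)^mn.1 *
          (((((mn.2+2).choose 2 : ℕ)):ℂ) * ((starRingEnd ℂ) (w θ))^mn.2)) := by
      exact summable_mul_of_summable_norm
        (f := fun n : ℕ => ((((n+2).choose 2 : ℕ)):ℂ) * (w θ)^n)
        (g := fun n : ℕ => ((((n+2).choose 2 : ℕ)):ℂ) * ((starRingEnd ℂ) (w θ))^n)
        (by rw [hnormA θ]; exact hSnorm) (by rw [hnormB θ]; exact hSnorm)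
    have := (hA θ).mul (hB θ) hsummul
    convert this using 1
    · rfl
    have h₁ : 1 - (starRingEnd ℂ) (w θ) = (starRingEnd ℂ) (1 - w θ) := by
      rw [map_sub, map_one]
    rw [h₁, div_mul_div_comm, one_mul, ← mul_pow, Complex.mul_conj, Complex.normSq_eq_norm_sq]
    push_cast
    rw [← pow_mul]
    norm_num
  -- integrability
  have hwc : Continuous w := by
    rw [hw_def]
    apply Continuous.div_const
    exact Complex.continuous_exp.comp (by fun_prop)
  have hFc : ∀ mn : ℕ × ℕ, Continuous (F mn) := by
    intro mn
    rw [hF_def]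
    exact (continuous_const.mul (hwc.pow mn.1)).mul
      (continuous_const.mul ((Complex.continuous_conj.comp hwc).pow mn.2))
  have hInt : ∀ mn : ℕ × ℕ, Integrable (F mn) (volume.restrict (Set.Ioc (0:ℝ) 1)) :=
    fun mn => (hFc mn).integrableOn_Ioc
  -- norm integrals
  have hnormint : ∀ mn : ℕ × ℕ, (∫ θ in Set.Ioc (0:ℝ) 1, ‖F mn θ‖)
      = ((((mn.1+2).choose 2 : ℕ):ℝ) * q^mn.1) * ((((mn.2+2).choose 2 : ℕ):ℝ) * q^mn.2) := by
    intro mn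
    have heq : ∀ θ : ℝ, ‖F mn θ‖
        = ((((mn.1+2).choose 2 : ℕ):ℝ) * q^mn.1) * ((((mn.2+2).choose 2 : ℕ):ℝ) * q^mn.2) := by
      intro θ
      rw [hF_def]
      simp only
      rw [norm_mul, norm_mul, norm_mul, norm_pow, norm_pow, hwn, hwcn]
      norm_num
    simp only [heq]
    rw [setIntegral_const]
    simp
  have hSum : Summable (fun mn : ℕ × ℕ => ∫ θ in Set.Ioc (0:ℝ) 1, ‖F mn θ‖) := by
    have : (fun mn : ℕ × ℕ => ∫ θ in Set.Ioc (0:ℝ) 1, ‖F mn θ‖)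
        = fun mn : ℕ × ℕ => ((((mn.1+2).choose 2 : ℕ):ℝ) * q^mn.1) *
            ((((mn.2+2).choose 2 : ℕ):ℝ) * q^mn.2) := by
      funext mn
      exact hnormint mn
    rw [this]
    apply summable_mul_of_summable_norm (f := fun n : ℕ => (((n+2).choose 2 : ℕ):ℝ) * q^n)
      (g := fun n : ℕ => (((n+2).choose 2 : ℕ):ℝ) * q^n) <;>
    · apply Summable.congr hSnorm.abs
      intro n
      rw [Real.norm_eq_abs]
  -- value of each integral
  have hint : ∀ mn : ℕ × ℕ, (∫ θ in Set.Ioc (0:ℝ) 1, F mn θ)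
      = if mn.1 = mn.2 then ((((mn.1+2).choose 2 : ℕ):ℂ))^2 * ((q:ℂ)^2)^mn.1 else 0 := by
    intro ⟨m, n⟩
    simp only
    have hptw : ∀ θ : ℝ, F (m, n) θ
        = ((((m+2).choose 2 : ℕ):ℂ) * (((n+2).choose 2 : ℕ):ℂ) * (q:ℂ)^(m+n)) *
            Complex.exp ((((m:ℤ) - (n:ℤ) : ℤ):ℂ) * (2 * Real.pi * I) * θ) := by
      intro θ
      have hconjw : (starRingEnd ℂ) (w θ) = Complex.exp (-(2 * Real.pi * I * θ)) / (sp : ℂ) := by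
        rw [hw_def]
        simp only
        rw [map_div₀, ← Complex.exp_conj, Complex.conj_ofReal]
        congr 1
        simp only [map_mul, Complex.conj_I, Complex.conj_ofReal, map_ofNat]
        ring
      rw [hF_def]
      simp only
      rw [hconjw, hw_def]
      simp only
      rw [div_pow, div_pow, ← Complex.exp_nat_mul, ← Complex.exp_nat_mul]
      have hexp : Complex.exp ((((m:ℤ) - (n:ℤ) : ℤ):ℂ) * (2 * Real.pi * I) * θ)
          = Complex.exp ((m:ℂ) * (2 * Real.pi * I * θ)) *
              Complex.exp ((n:ℂ) * -(2 * Real.pi * I * θ)) := by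
        rw [← Complex.exp_add]
        congr 1
        push_cast
        ring
      rw [hexp, hq_def]
      push_cast
      field_simp
      ring
    simp only [hptw]
    rw [← intervalIntegral.integral_of_le zero_le_one, intervalIntegral.integral_const_mul,
      int_exp]
    by_cases h : m = n
    · subst h
      rw [sub_self, if_pos rfl, if_pos rfl, mul_one,
        show ((q:ℂ))^(m+m) = (((q:ℂ))^2)^m by rw [← pow_mul, two_mul]]
      ring
    · have : ((m:ℤ) - (n:ℤ)) ≠ 0 := by
        intro hc
        apply h
        omega
      simp [this, h]
  -- put everything together
  have key : ((∫ θ in (0:ℝ)..1,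
        ((‖1 - Complex.exp (2 * Real.pi * I * θ) / (sp:ℂ)‖)^6)⁻¹ : ℝ) : ℂ)
      = ∑' n : ℕ, ((((n+2).choose 2 : ℕ):ℂ))^2 * ((q:ℂ)^2)^n := by
    rw [← intervalIntegral.integral_ofReal]
    simp only [hwfold]
    have hptw : ∀ θ : ℝ, ((((‖1 - w θ‖)^6)⁻¹ : ℝ) : ℂ) = ∑' mn : ℕ × ℕ, F mn θ :=
      fun θ => ((hF θ).tsum_eq).symm
    simp only [hptw]
    rw [intervalIntegral.integral_of_le zero_le_one,
      ← MeasureTheory.integral_tsum_of_summable_integral_norm hInt hSum]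
    rw [tsum_congr hint]
    rw [← Function.Injective.tsum_eq (g := fun n : ℕ => (n, n))
      (fun a b hab => (Prod.mk.injEq _ _ _ _ ▸ hab : a = b ∧ a = b).1) ?_]
    · simp
    · intro ⟨m, n⟩ hmn
      simp only [Function.mem_support, ne_eq] at hmn
      by_contra hcon
      apply hmn
      have : m ≠ n := by
        intro h
        exact hcon ⟨m, by rw [h]⟩
      simp [this]
  -- finish
  have hreal : (∫ θ in (0:ℝ)..1,
        ((‖1 - Complex.exp (2 * Real.pi * I * θ) / (sp:ℂ)‖)^6)⁻¹)
      = ∑' n : ℕ, (((n+2).choose 2 : ℕ):ℝ)^2 * (q^2)^n := by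
    have : ((∑' n : ℕ, (((n+2).choose 2 : ℕ):ℝ)^2 * (q^2)^n : ℝ) : ℂ)
        = ∑' n : ℕ, ((((n+2).choose 2 : ℕ):ℂ))^2 * ((q:ℂ)^2)^n := by
      rw [Complex.ofReal_tsum]
      push_cast
      rfl
    apply Complex.ofReal_inj.mp
    rw [key, this]
  rw [hreal]
  have hq2lt : q^2 < 1 := by
    calc q^2 < 1^2 := by
          apply pow_lt_pow_left₀ hq1 hq0.le
          norm_num
      _ = 1 := one_pow 2
  have := (series_sum (r := q^2) (sq_nonneg q) hq2lt).tsum_eq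
  rw [this, hqsq]
  rw [div_eq_mul_inv]
  ring_nf
end
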